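/- arXiv:2603.01446 — 9 statements merged into one kernel-verified Lean document; each statement's English description precedes it below -/
import Mathlib

section
/- Let X be a normed linear space over ℝ. For all x, y in X, |‖x‖ - ‖y‖| ≤ ‖x + y‖ + ‖x - y‖ - (‖x‖ + ‖y‖). -/
theorem stmt_1 {X : Type*} [NormedAddCommGroup X] [NormedSpace ℝ X] :
    ∀ x y : X, |‖x‖ - ‖y‖| ≤ ‖x + y‖ + ‖x - y‖ - (‖x‖ + ‖y‖) := by
  intro x y
  have hx : ‖x + x‖ = 2 * ‖x‖ := by rw [← two_smul ℝ x, norm_smul]; simp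
  have hy : ‖y + y‖ = 2 * ‖y‖ := by rw [← two_smul ℝ y, norm_smul]; simp
  have h1 : ‖x + x‖ ≤ ‖x + y‖ + ‖x - y‖ := by
    calc ‖x + x‖ = ‖(x + y) + (x - y)‖ := by rw [show (x + y) + (x - y) = x + x by abel]
    _ ≤ ‖x + y‖ + ‖x - y‖ := norm_add_le _ _
  have h2 : ‖y + y‖ ≤ ‖x + y‖ + ‖x - y‖ := by
    calc ‖y + y‖ = ‖(x + y) - (x - y)‖ := by rw [show (x + y) - (x - y) = y + y by abel]
    _ ≤ ‖x + y‖ + ‖x - y‖ := norm_sub_le _ _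
  rw [abs_sub_le_iff]
  constructor <;> linarith
end

section
/- Let X be a normed linear space over ℝ. For all x, y in X, ‖x + y‖ + ‖x - y‖ - (‖x‖ + ‖y‖) ≤ min(‖x - y‖, ‖x + y‖). -/
theorem stmt_2 {X : Type*} [NormedAddCommGroup X] [NormedSpace ℝ X] :
    ∀ x y : X, ‖x + y‖ + ‖x - y‖ - (‖x‖ + ‖y‖) ≤ min ‖x - y‖ ‖x + y‖ := by
  intro x y
  have h1 := norm_add_le x y
  have h2 := norm_sub_le x y
  exact le_min (by linarith) (by linarith)
end

section
/- Let X be a normed linear space over ℝ. For all x, y in X, |‖x‖ - ‖y‖| ≤ ‖x‖ + ‖y‖ - |‖x + y‖ - ‖x - y‖|. -/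
theorem stmt_3 {X : Type*} [NormedAddCommGroup X] [NormedSpace ℝ X] :
    ∀ x y : X, |‖x‖ - ‖y‖| ≤ ‖x‖ + ‖y‖ - |‖x + y‖ - ‖x - y‖| := by
  intro x y
  have h1 := abs_norm_sub_norm_le (x + y) (y - x)
  have h2 := abs_norm_sub_norm_le (x + y) (x - y)
  have e1 : (x + y) - (y - x) = x + x := by abel
  have e2 : (x + y) - (x - y) = y + y := by abel
  rw [e1] at h1
  rw [e2] at h2
  have h3 : ‖x + x‖ ≤ ‖x‖ + ‖x‖ := norm_add_le x x
  have h4 : ‖y + y‖ ≤ ‖y‖ + ‖y‖ := norm_add_le y y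
  have h5 : ‖y - x‖ = ‖x - y‖ := norm_sub_rev y x
  rw [h5] at h1
  rw [abs_le] at h1 h2 ⊢
  rcases abs_cases (‖x + y‖ - ‖x - y‖) with ⟨he, _⟩ | ⟨he, _⟩ <;> rw [he] <;>
    constructor <;> linarith
end

section
/- Let K be a nonarchimedean normed field of characteristic different from 2, and let X be a normed vector space over K whose norm satisfies the ultrametric inequality. Then for all x, y in X, |‖x‖ - ‖y‖| ≤ (2/‖2‖) · max(‖x - y‖, ‖x + y‖) - (‖x‖ + ‖y‖), where ‖2‖ is the norm of 2 in K (nonzero since char K ≠ 2). -/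
theorem stmt_6 {K : Type*} [NormedField K]
    (hna : IsNonarchimedean (fun x : K => ‖x‖)) (hchar : ringChar K ≠ 2)
    {X : Type*} [NormedAddCommGroup X] [NormedSpace K X]
    (hX : ∀ x y : X, ‖x + y‖ ≤ max ‖x‖ ‖y‖) :
    ∀ x y : X, |‖x‖ - ‖y‖| ≤ (2 / ‖(2 : K)‖) * max ‖x - y‖ ‖x + y‖ - (‖x‖ + ‖y‖) := by
  intro x y
  have h2 : (2 : K) ≠ 0 := Ring.two_ne_zero hchar
  have h2n : 0 < ‖(2 : K)‖ := norm_pos_iff.mpr h2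
  set M := max ‖x - y‖ ‖x + y‖ with hM
  have hx : ‖(2 : K)‖ * ‖x‖ ≤ M := by
    have h : (2 : K) • x = (x + y) + (x - y) := by
      rw [two_smul]; abel
    calc ‖(2 : K)‖ * ‖x‖ = ‖(2 : K) • x‖ := (norm_smul _ _).symm
      _ = ‖(x + y) + (x - y)‖ := by rw [h]
      _ ≤ max ‖x + y‖ ‖x - y‖ := hX _ _
      _ = M := max_comm _ _
  have hy : ‖(2 : K)‖ * ‖y‖ ≤ M := by
    have h : (2 : K) • y = (x + y) + (y - x) := by
      rw [two_smul]; abel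
    calc ‖(2 : K)‖ * ‖y‖ = ‖(2 : K) • y‖ := (norm_smul _ _).symm
      _ = ‖(x + y) + (y - x)‖ := by rw [h]
      _ ≤ max ‖x + y‖ ‖y - x‖ := hX _ _
      _ = M := by rw [norm_sub_rev y x, max_comm]
  have hx' : ‖x‖ ≤ M / ‖(2 : K)‖ := (le_div_iff₀' h2n).mpr hx
  have hy' : ‖y‖ ≤ M / ‖(2 : K)‖ := (le_div_iff₀' h2n).mpr hy
  have hrw : (2 / ‖(2 : K)‖) * M = 2 * (M / ‖(2 : K)‖) := by ring
  rw [hrw, abs_sub_le_iff]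
  constructor <;> linarith
end

section
/- Let K be a nonarchimedean normed field of characteristic different from 2, and let X be a normed vector space over K with an ultrametric norm. Then for all x, y in X, |‖x‖ - ‖y‖| ≤ ‖x‖ + ‖y‖ - (2/‖2‖) · |‖x + y‖ - ‖x - y‖|. -/
section aux

variable {K : Type*} [NormedField K] {X : Type*} [NormedAddCommGroup X] [NormedSpace K X]

private lemma ultra_sub (hX : ∀ x y : X, ‖x + y‖ ≤ max ‖x‖ ‖y‖) (u v : X) :
    ‖u - v‖ ≤ max ‖u‖ ‖v‖ := by
  have := hX u (-v)
  simpa [sub_eq_add_neg] using this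

private lemma ultra_eq (hX : ∀ x y : X, ‖x + y‖ ≤ max ‖x‖ ‖y‖) {u v : X}
    (h : ‖v‖ < ‖u‖) : ‖u + v‖ = ‖u‖ := by
  have h1 : ‖u + v‖ ≤ ‖u‖ := by
    have := hX u v
    rwa [max_eq_left h.le] at this
  have h2 : ‖u‖ ≤ ‖u + v‖ := by
    have h3 : ‖u‖ ≤ max ‖u + v‖ ‖v‖ := by
      have := ultra_sub hX (u + v) v
      simpa using this
    rcases max_cases ‖u + v‖ ‖v‖ with ⟨he, _⟩ | ⟨he, _⟩
    · rwa [he] at h3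
    · rw [he] at h3; exact absurd h3 (not_le.mpr h)
  linarith

private lemma aux_one (hX : ∀ x y : X, ‖x + y‖ ≤ max ‖x‖ ‖y‖)
    (h2pos : (0:ℝ) < ‖(2:K)‖) (h2le : ‖(2:K)‖ ≤ 1) (x y : X)
    (hle : ‖x - y‖ ≤ ‖x + y‖) :
    ‖x + y‖ - ‖x - y‖ ≤ ‖(2:K)‖ * min ‖x‖ ‖y‖ := by
  rcases eq_or_lt_of_le hle with heq | hlt
  · rw [heq]
    simp
    positivity
  · -- ‖x-y‖ < ‖x+y‖
    have h2x : ‖x + x‖ = ‖x + y‖ := by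
      have := ultra_eq hX hlt
      have he : (x + y) + (x - y) = x + x := by abel
      rwa [he] at this
    have hxx : ‖x + x‖ = ‖(2:K)‖ * ‖x‖ := by
      rw [← norm_smul, two_smul]
    have hp : ‖x + y‖ = ‖(2:K)‖ * ‖x‖ := by rw [← h2x, hxx]
    -- ‖2‖*‖y‖ ≤ ‖2‖*‖x‖
    have hyy : ‖(2:K)‖ * ‖y‖ ≤ ‖(2:K)‖ * ‖x‖ := by
      have h1 : ‖y + y‖ ≤ max ‖x + y‖ ‖x - y‖ := by
        have := ultra_sub hX (x + y) (x - y)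
        have he : (x + y) - (x - y) = y + y := by abel
        rwa [he] at this
      rw [max_eq_left hlt.le, hp] at h1
      calc ‖(2:K)‖ * ‖y‖ = ‖y + y‖ := by rw [← norm_smul, two_smul]
        _ ≤ ‖(2:K)‖ * ‖x‖ := h1
    have hba : ‖y‖ ≤ ‖x‖ := le_of_mul_le_mul_left hyy h2pos
    have hqa : ‖x - y‖ < ‖x‖ := by
      calc ‖x - y‖ < ‖x + y‖ := hlt
        _ = ‖(2:K)‖ * ‖x‖ := hp
        _ ≤ 1 * ‖x‖ := by
            apply mul_le_mul_of_nonneg_right h2le (norm_nonneg _)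
        _ = ‖x‖ := one_mul _
    have hab : ‖x‖ ≤ ‖y‖ := by
      have h1 : ‖x‖ ≤ max ‖y‖ ‖x - y‖ := by
        have := hX y (x - y)
        have he : y + (x - y) = x := by abel
        rwa [he] at this
      rcases max_cases ‖y‖ ‖x - y‖ with ⟨he, _⟩ | ⟨he, _⟩
      · rwa [he] at h1
      · rw [he] at h1; exact absurd h1 (not_le.mpr hqa)
    have hmin : min ‖x‖ ‖y‖ = ‖x‖ := min_eq_left hab
    rw [hmin, ← hp]
    have := norm_nonneg (x - y)
    linarith

private lemma aux_key (hX : ∀ x y : X, ‖x + y‖ ≤ max ‖x‖ ‖y‖)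
    (h2pos : (0:ℝ) < ‖(2:K)‖) (h2le : ‖(2:K)‖ ≤ 1) (x y : X) :
    |‖x + y‖ - ‖x - y‖| ≤ ‖(2:K)‖ * min ‖x‖ ‖y‖ := by
  rcases le_total ‖x - y‖ ‖x + y‖ with h | h
  · rw [abs_of_nonneg (by linarith)]
    exact aux_one hX h2pos h2le x y h
  · rw [abs_of_nonpos (by linarith)]
    have := aux_one hX h2pos h2le x (-y) (by
      simpa [sub_neg_eq_add, sub_eq_add_neg] using h)
    have he1 : x + -y = x - y := by abel
    have he2 : x - -y = x + y := by abel
    rw [he1, he2, norm_neg] at this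
    linarith

end aux

theorem stmt_9 {K : Type*} [NormedField K]
    (hna : IsNonarchimedean (fun x : K => ‖x‖)) (hchar : ringChar K ≠ 2)
    {X : Type*} [NormedAddCommGroup X] [NormedSpace K X]
    (hX : ∀ x y : X, ‖x + y‖ ≤ max ‖x‖ ‖y‖) :
    ∀ x y : X, |‖x‖ - ‖y‖| ≤ ‖x‖ + ‖y‖ - (2 / ‖(2 : K)‖) * |‖x + y‖ - ‖x - y‖| := by
  have h2ne : (2 : K) ≠ 0 := Ring.two_ne_zero hchar
  have h2pos : (0:ℝ) < ‖(2:K)‖ := norm_pos_iff.mpr h2ne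
  have h2le : ‖(2:K)‖ ≤ 1 := by
    have := hna 1 1
    rw [← one_add_one_eq_two]
    simpa using this
  intro x y
  have key := aux_key hX h2pos h2le x y
  have hmain : (2 / ‖(2:K)‖) * |‖x + y‖ - ‖x - y‖| ≤ 2 * min ‖x‖ ‖y‖ := by
    have h1 : (2 / ‖(2:K)‖) * |‖x + y‖ - ‖x - y‖| ≤
        (2 / ‖(2:K)‖) * (‖(2:K)‖ * min ‖x‖ ‖y‖) :=
      mul_le_mul_of_nonneg_left key (by positivity)
    have h2 : (2 / ‖(2:K)‖) * (‖(2:K)‖ * min ‖x‖ ‖y‖) = 2 * min ‖x‖ ‖y‖ := by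
      field_simp
    linarith
  rcases le_total ‖x‖ ‖y‖ with h | h
  · rw [min_eq_left h] at hmain
    rw [abs_of_nonpos (by linarith : ‖x‖ - ‖y‖ ≤ 0)]
    linarith
  · rw [min_eq_right h] at hmain
    rw [abs_of_nonneg (by linarith : (0:ℝ) ≤ ‖x‖ - ‖y‖)]
    linarith
end

section
/- Let K be a nonarchimedean normed field with ‖2‖ = 1 (e.g., residue characteristic different from 2), and let X be a normed vector space over K with an ultrametric norm. Then for all x, y in X, |‖x‖ - ‖y‖| ≤ 2 · max(‖x - y‖, ‖x + y‖) - (‖x‖ + ‖y‖) and this is at most 2 · max(‖x‖, ‖y‖) - (‖x‖ + ‖y‖). -/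
theorem stmt_10 {K : Type*} [NormedField K]
    (hna : IsNonarchimedean (fun x : K => ‖x‖)) (h2 : ‖(2 : K)‖ = 1)
    {X : Type*} [NormedAddCommGroup X] [NormedSpace K X]
    (hX : ∀ x y : X, ‖x + y‖ ≤ max ‖x‖ ‖y‖) :
    ∀ x y : X, |‖x‖ - ‖y‖| ≤ 2 * max ‖x - y‖ ‖x + y‖ - (‖x‖ + ‖y‖) ∧
      2 * max ‖x - y‖ ‖x + y‖ - (‖x‖ + ‖y‖) ≤ 2 * max ‖x‖ ‖y‖ - (‖x‖ + ‖y‖) := by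
  intro x y
  set M := max ‖x - y‖ ‖x + y‖ with hM
  have hx : ‖x‖ ≤ M := by
    have h1 : (2 : K) • x = (x - y) + (x + y) := by rw [two_smul]; abel
    have hs : ‖(2 : K) • x‖ = ‖x‖ := by rw [norm_smul, h2, one_mul]
    calc ‖x‖ = ‖(x - y) + (x + y)‖ := by rw [← h1, hs]
      _ ≤ M := hX _ _
  have hy : ‖y‖ ≤ M := by
    have h1 : (2 : K) • y = (x + y) + -(x - y) := by rw [two_smul]; abel
    have hs : ‖(2 : K) • y‖ = ‖y‖ := by rw [norm_smul, h2, one_mul]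
    calc ‖y‖ = ‖(x + y) + -(x - y)‖ := by rw [← h1, hs]
      _ ≤ max ‖x + y‖ ‖-(x - y)‖ := hX _ _
      _ = M := by rw [norm_neg, max_comm]
  refine ⟨?_, ?_⟩
  · rw [abs_sub_le_iff]; constructor <;> linarith
  · have h3 : ‖x - y‖ ≤ max ‖x‖ ‖y‖ := by
      have := hX x (-y); simpa [sub_eq_add_neg] using this
    have h4 : ‖x + y‖ ≤ max ‖x‖ ‖y‖ := hX x y
    have : M ≤ max ‖x‖ ‖y‖ := max_le h3 h4
    linarith
end

section
/- Let K be a nonarchimedean normed field with ‖2‖ = 1, and let X be a normed vector space over K with an ultrametric norm. Then for all x, y in X, |‖x‖ - ‖y‖| ≤ ‖x‖ + ‖y‖ - 2 · |‖x + y‖ - ‖x - y‖|. -/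
lemma ultra_eq_of_lt {X : Type*} [NormedAddCommGroup X]
    (hX : ∀ x y : X, ‖x + y‖ ≤ max ‖x‖ ‖y‖) {x y : X} (h : ‖y‖ < ‖x‖) :
    ‖x + y‖ = ‖x‖ := by
  have h1 : ‖x + y‖ ≤ ‖x‖ := (hX x y).trans (by rw [max_eq_left h.le])
  have h2 : ‖x‖ ≤ max ‖x + y‖ ‖y‖ := by
    have := hX (x + y) (-y)
    simpa using this
  refine le_antisymm h1 ?_
  by_contra hc
  push_neg at hc
  have : max ‖x + y‖ ‖y‖ < ‖x‖ := max_lt hc h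
  linarith

theorem stmt_11 {K : Type*} [NormedField K]
    (hna : IsNonarchimedean (fun x : K => ‖x‖)) (h2 : ‖(2 : K)‖ = 1)
    {X : Type*} [NormedAddCommGroup X] [NormedSpace K X]
    (hX : ∀ x y : X, ‖x + y‖ ≤ max ‖x‖ ‖y‖) :
    ∀ x y : X, |‖x‖ - ‖y‖| ≤ ‖x‖ + ‖y‖ - 2 * |‖x + y‖ - ‖x - y‖| := by
  intro x y
  rcases lt_trichotomy ‖x‖ ‖y‖ with h | h | h
  · have e1 : ‖x + y‖ = ‖y‖ := by
      rw [add_comm]; exact ultra_eq_of_lt hX h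
    have e2 : ‖x - y‖ = ‖y‖ := by
      have := ultra_eq_of_lt hX (x := -y) (y := x) (by simpa using h)
      rw [sub_eq_add_neg, add_comm]
      simpa using this
    rw [e1, e2, sub_self, abs_zero]
    rw [abs_sub_le_iff]
    constructor <;> nlinarith [norm_nonneg x, norm_nonneg y]
  · have h1 : ‖x + y‖ ≤ ‖x‖ := (hX x y).trans (by rw [h, max_self])
    have h2 : ‖x - y‖ ≤ ‖x‖ := by
      have := hX x (-y)
      rw [sub_eq_add_neg]
      simpa [h] using this
    have h3 : |‖x + y‖ - ‖x - y‖| ≤ ‖x‖ := by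
      rw [abs_sub_le_iff]
      constructor <;> linarith [norm_nonneg (x + y), norm_nonneg (x - y)]
    rw [h, sub_self, abs_zero]
    linarith
  · have e1 : ‖x + y‖ = ‖x‖ := ultra_eq_of_lt hX h
    have e2 : ‖x - y‖ = ‖x‖ := by
      have := ultra_eq_of_lt hX (x := x) (y := -y) (by simpa using h)
      rw [sub_eq_add_neg]
      simpa using this
    rw [e1, e2, sub_self, abs_zero]
    rw [abs_sub_le_iff]
    constructor <;> nlinarith [norm_nonneg x, norm_nonneg y]
end

section
/- Let X be a normed vector space over the 2-adic numbers ℚ₂ whose norm satisfies the ultrametric inequality. Then for all x, y in X, |‖x‖ - ‖y‖| ≤ ‖x‖ + ‖y‖ - 4 · |‖x + y‖ - ‖x - y‖|. -/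
theorem stmt_13 {X : Type*} [NormedAddCommGroup X] [NormedSpace ℚ_[2] X]
    (hX : ∀ x y : X, ‖x + y‖ ≤ max ‖x‖ ‖y‖) :
    ∀ x y : X, |‖x‖ - ‖y‖| ≤ ‖x‖ + ‖y‖ - 4 * |‖x + y‖ - ‖x - y‖| := by
  have hn2 : ‖(2 : ℚ_[2])‖ = 2⁻¹ := by
    have := @Padic.norm_p 2 _
    norm_num at this ⊢
    exact this
  have h2 : ∀ z : X, ‖z + z‖ = 2⁻¹ * ‖z‖ := by
    intro z
    have e : (2 : ℚ_[2]) • z = z + z := two_smul _ z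
    rw [← e, norm_smul, hn2]
  have key : ∀ u v : X, ‖v‖ < ‖u‖ → ‖u + v‖ = ‖u‖ := by
    intro u v h
    refine le_antisymm ((hX u v).trans (by rw [max_eq_left h.le])) ?_
    have h1 : ‖u‖ ≤ max ‖u + v‖ ‖v‖ := by
      have := hX (u + v) (-v)
      simpa using this
    rcases le_max_iff.mp h1 with h' | h'
    · exact h'
    · linarith
  intro x y
  set a := x + y with ha
  set b := x - y with hb
  rcases lt_trichotomy ‖a‖ ‖b‖ with h | h | h
  · -- ‖b‖ > ‖a‖
    have e1 : b + a = x + x := by rw [ha, hb]; abel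
    have e2 : b + (-a) = -(y + y) := by rw [ha, hb]; abel
    have k1 : ‖b + a‖ = ‖b‖ := key b a h
    have k2 : ‖b + (-a)‖ = ‖b‖ := key b (-a) (by simpa using h)
    rw [e1, h2 x] at k1
    rw [e2, norm_neg, h2 y] at k2
    have hx : ‖x‖ = 2 * ‖b‖ := by linarith
    have hy : ‖y‖ = 2 * ‖b‖ := by linarith
    have h3 : |‖a‖ - ‖b‖| = ‖b‖ - ‖a‖ := by
      rw [abs_of_nonpos (by linarith)]; ring
    rw [hx, hy, h3]
    simp only [sub_self, abs_zero]
    linarith [norm_nonneg a]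
  · rw [h, sub_self, abs_zero]
    rcases abs_cases (‖x‖ - ‖y‖) with ⟨h1, _⟩ | ⟨h1, _⟩ <;>
      linarith [norm_nonneg x, norm_nonneg y]
  · -- ‖a‖ > ‖b‖
    have e1 : a + b = x + x := by rw [ha, hb]; abel
    have e2 : a + (-b) = y + y := by rw [ha, hb]; abel
    have k1 : ‖a + b‖ = ‖a‖ := key a b h
    have k2 : ‖a + (-b)‖ = ‖a‖ := key a (-b) (by simpa using h)
    rw [e1, h2 x] at k1
    rw [e2, h2 y] at k2
    have hx : ‖x‖ = 2 * ‖a‖ := by linarith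
    have hy : ‖y‖ = 2 * ‖a‖ := by linarith
    have h3 : |‖a‖ - ‖b‖| = ‖a‖ - ‖b‖ := abs_of_nonneg (by linarith)
    rw [hx, hy, h3]
    simp only [sub_self, abs_zero]
    linarith [norm_nonneg b]
end

section
/- Let p be an odd prime and X a normed vector space over ℚₚ with ultrametric norm. Then for all x, y in X, |‖x‖ - ‖y‖| ≤ ‖x‖ + ‖y‖ - 2 · |‖x + y‖ - ‖x - y‖|. -/
theorem stmt_15 (p : ℕ) [Fact p.Prime] (hp : Odd p)
    {X : Type*} [NormedAddCommGroup X] [NormedSpace ℚ_[p] X]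
    (hX : ∀ x y : X, ‖x + y‖ ≤ max ‖x‖ ‖y‖) :
    ∀ x y : X, |‖x‖ - ‖y‖| ≤ ‖x‖ + ‖y‖ - 2 * |‖x + y‖ - ‖x - y‖| := by
  -- ‖2‖ = 1 in ℚ_[p]
  have h2 : ‖(2 : ℚ_[p])‖ = 1 := by
    have h1 : ‖(2 : ℚ_[p])‖ ≤ 1 := by
      simpa using Padic.norm_int_le_one (p := p) 2
    have h2' : ¬ ‖((2 : ℤ) : ℚ_[p])‖ < 1 := by
      rw [Padic.norm_intCast_lt_one_iff]
      intro h
      have hp2 : p ∣ 2 := by exact_mod_cast h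
      have hle : p ≤ 2 := Nat.le_of_dvd (by norm_num) hp2
      have hge : 2 ≤ p := (Fact.out : p.Prime).two_le
      rcases hp with ⟨k, hk⟩
      omega
    push_cast at h2'
    linarith [lt_or_eq_of_le h1, not_lt.mp h2']
  have hdouble : ∀ z : X, ‖z + z‖ = ‖z‖ := by
    intro z
    have : z + z = (2 : ℚ_[p]) • z := (two_smul (ℚ_[p]) z).symm
    rw [this, norm_smul, h2, one_mul]
  -- ultrametric: if norms differ, norm of sum is max
  have hmax : ∀ a b : X, ‖a‖ ≠ ‖b‖ → ‖a + b‖ = max ‖a‖ ‖b‖ := by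
    intro a b hne
    rcases lt_or_gt_of_ne hne with h | h
    · have h1 : ‖b‖ ≤ ‖a + b‖ := by
        have := hX (a + b) (-a)
        simp only [add_neg_cancel_comm, norm_neg] at this
        rcases max_cases ‖a + b‖ ‖a‖ with ⟨he, _⟩ | ⟨he, hlt⟩
        · rw [he] at this; exact this
        · rw [he] at this; linarith
      have h2' : ‖a + b‖ ≤ max ‖a‖ ‖b‖ := hX a b
      rw [max_eq_right h.le] at h2' ⊢
      linarith
    · have h1 : ‖a‖ ≤ ‖a + b‖ := by
        have := hX (a + b) (-b)
        simp only [add_neg_cancel_right, norm_neg] at this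
        rcases max_cases ‖a + b‖ ‖b‖ with ⟨he, _⟩ | ⟨he, hlt⟩
        · rw [he] at this; exact this
        · rw [he] at this; linarith
      have h2' : ‖a + b‖ ≤ max ‖a‖ ‖b‖ := hX a b
      rw [max_eq_left h.le] at h2' ⊢
      linarith
  intro x y
  by_cases hne : ‖x + y‖ = ‖x - y‖
  · rw [hne, sub_self, abs_zero, mul_zero, sub_zero]
    rw [abs_sub_le_iff]
    constructor <;> linarith [norm_nonneg x, norm_nonneg y]
  · have hx : ‖x‖ = max ‖x + y‖ ‖x - y‖ := by
      have : (x + y) + (x - y) = x + x := by abel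
      rw [← hdouble x, ← this, hmax _ _ hne]
    have hy : ‖y‖ = max ‖x + y‖ ‖x - y‖ := by
      have heq : (x + y) + -(x - y) = y + y := by abel
      have hne' : ‖x + y‖ ≠ ‖-(x - y)‖ := by rwa [norm_neg]
      rw [← hdouble y, ← heq, hmax _ _ hne', norm_neg]
    rw [hx, hy]
    have habs : |‖x + y‖ - ‖x - y‖| = max ‖x + y‖ ‖x - y‖ - min ‖x + y‖ ‖x - y‖ := by
      rw [abs_sub_comm]; exact (max_sub_min_eq_abs ‖x + y‖ ‖x - y‖).symm
    rw [habs, sub_self, abs_zero]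
    have : (0:ℝ) ≤ min ‖x + y‖ ‖x - y‖ := le_min (norm_nonneg _) (norm_nonneg _)
    linarith
end
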